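/- The map φ: (𝔖, ≺) → (⟨ℭ⟩, ≺_lex), sending each permutation to the word of connected permutations appearing in its unique factorization with respect to ×, is an isomorphism of totally ordered sets, where ⟨ℭ⟩ carries the pseudo-lexicographic order ≺_lex associated to the restriction of ≺ to ℭ. -/

import Mathlib

noncomputable section

namespace AdamsPaper

/-- The pseudo-lexicographic order on words associated to a (strict) order on the
alphabet: `u <_lex v` iff `u = v ++ w` for some nonempty `w`, or `u = r ++ x :: s` and
`v = r ++ y :: t` with `x < y`. -/
def ltLex {X : Type*} (ltX : X → X → Prop) (u v : List X) : Prop :=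
  (∃ w : List X, w ≠ [] ∧ u = v ++ w) ∨
    ∃ (r s t : List X) (x y : X), ltX x y ∧ u = r ++ x :: s ∧ v = r ++ y :: t

/-- The order `≺` on permutations: the pseudo-lexicographic order on one-line notation
words over `ℤ₊ = {1 < 2 < 3 < ⋯}`. -/
def permLt (u v : List ℕ) : Prop := ltLex (· < ·) u v

/-- `u` is (the one-line notation of) a permutation of `{1, …, m}`, `m = u.length`. -/
def IsPermWord (u : List ℕ) : Prop :=
  u.Nodup ∧ ∀ i ∈ u, 1 ≤ i ∧ i ≤ u.length

/-- The product `σ × τ` of permutations in one-line notation. -/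
def mulX (u v : List ℕ) : List ℕ := u ++ v.map (· + u.length)

/-- The permutation `σ₁ × ⋯ × σ_r` associated to a word `(σ₁, …, σ_r)` on the alphabet
of permutations. -/
def prodX (L : List (List ℕ)) : List ℕ := L.foldr mulX []

/-- `u` is a connected permutation: a nonempty permutation word preserving no proper
initial segment `{1, …, i}`, `1 ≤ i ≤ m − 1`. -/
def IsConnectedPerm (u : List ℕ) : Prop :=
  IsPermWord u ∧ u ≠ [] ∧ ∀ i : ℕ, 1 ≤ i → i < u.length → ¬ (∀ x ∈ u.take i, x ≤ i)

-- ### basic lemmas on mulX / prodX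

lemma length_mulX (u v : List ℕ) : (mulX u v).length = u.length + v.length := by
  simp [mulX]

lemma prodX_nil : prodX [] = [] := rfl

lemma prodX_cons (u : List ℕ) (L : List (List ℕ)) : prodX (u :: L) = mulX u (prodX L) := rfl

lemma mulX_nil_left (v : List ℕ) : mulX [] v = v := by simp [mulX]

lemma mulX_assoc (u v w : List ℕ) : mulX (mulX u v) w = mulX u (mulX v w) := by
  simp only [mulX, List.map_append, List.map_map, List.append_assoc, List.length_append,
    List.length_map]
  congr 2
  apply List.map_congr_left
  intro a _
  simp [Function.comp]
  omega

lemma prodX_append (L M : List (List ℕ)) : prodX (L ++ M) = mulX (prodX L) (prodX M) := by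
  induction L with
  | nil => simp [prodX_nil, mulX_nil_left]
  | cons a L ih => simp [prodX_cons, ih, mulX_assoc]

lemma mulX_isPermWord {u v : List ℕ} (hu : IsPermWord u) (hv : IsPermWord v) :
    IsPermWord (mulX u v) := by
  obtain ⟨hnu, hbu⟩ := hu
  obtain ⟨hnv, hbv⟩ := hv
  constructor
  · rw [mulX]
    refine List.Nodup.append hnu (hnv.map (add_left_injective _)) ?_
    intro x hxu hxv
    obtain ⟨y, hy, rfl⟩ := List.mem_map.1 hxv
    have h1 := (hbu _ hxu).2
    have h2 := (hbv y hy).1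
    omega
  · intro i hi
    rw [length_mulX]
    rcases List.mem_append.1 hi with h | h
    · have := hbu i h; omega
    · obtain ⟨y, hy, rfl⟩ := List.mem_map.1 h
      have := hbv y hy; omega

lemma prodX_isPermWord {L : List (List ℕ)} (h : ∀ τ ∈ L, IsPermWord τ) :
    IsPermWord (prodX L) := by
  induction L with
  | nil => exact ⟨List.nodup_nil, fun i hi => absurd hi List.not_mem_nil⟩
  | cons a L ih =>
    rw [prodX_cons]
    exact mulX_isPermWord (h a (by simp)) (ih fun τ hτ => h τ (by simp [hτ]))

lemma prodX_ne_nil {N : List (List ℕ)} (hN : ∀ τ ∈ N, IsConnectedPerm τ) (h : N ≠ []) :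
    prodX N ≠ [] := by
  cases N with
  | nil => exact absurd rfl h
  | cons τ N' =>
    have hτ := (hN τ (by simp)).2.1
    rw [prodX_cons, mulX]
    simp [hτ]

-- ### perm word structural lemmas

lemma permWord_mem {u : List ℕ} (hu : IsPermWord u) {x : ℕ} (h1 : 1 ≤ x)
    (h2 : x ≤ u.length) : x ∈ u := by
  have hsub : u.toFinset ⊆ Finset.Icc 1 u.length := by
    intro y hy
    rw [List.mem_toFinset] at hy
    exact Finset.mem_Icc.2 (hu.2 y hy)
  have hcard : (Finset.Icc 1 u.length).card ≤ u.toFinset.card := by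
    rw [List.toFinset_card_of_nodup hu.1, Nat.card_Icc]
    omega
  have heq := Finset.eq_of_subset_of_card_le hsub hcard
  have : x ∈ u.toFinset := heq ▸ Finset.mem_Icc.2 ⟨h1, h2⟩
  exact List.mem_toFinset.1 this

lemma take_isPermWord {u : List ℕ} (hu : IsPermWord u) {i : ℕ} (hi : i ≤ u.length)
    (hcl : ∀ x ∈ u.take i, x ≤ i) : IsPermWord (u.take i) := by
  constructor
  · exact (List.take_sublist i u).nodup hu.1
  · intro x hx
    have h1 := (hu.2 x (List.mem_of_mem_take hx)).1
    have h2 := hcl x hx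
    rw [List.length_take]
    omega

lemma drop_gt {u : List ℕ} (hu : IsPermWord u) {i : ℕ} (hi : i ≤ u.length)
    (hcl : ∀ x ∈ u.take i, x ≤ i) : ∀ x ∈ u.drop i, i < x := by
  intro x hx
  by_contra h
  push_neg at h
  have hx1 : 1 ≤ x := (hu.2 x (List.mem_of_mem_drop hx)).1
  have htp := take_isPermWord hu hi hcl
  have hmem : x ∈ u.take i := permWord_mem htp hx1 (by rw [List.length_take]; omega)
  have hnd := hu.1
  rw [← List.take_append_drop i u] at hnd
  exact (List.nodup_append.1 hnd).2.2 x hmem x hx rfl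

lemma factor_nil : ∃! L : List (List ℕ), (∀ τ ∈ L, IsConnectedPerm τ) ∧ prodX L = [] := by
  refine ⟨[], ⟨by simp, rfl⟩, ?_⟩
  rintro M ⟨hM, hMp⟩
  cases M with
  | nil => rfl
  | cons τ M' => exact absurd hMp (prodX_ne_nil hM (by simp))

theorem factor_exu : ∀ n (u : List ℕ), u.length ≤ n → IsPermWord u →
    ∃! L : List (List ℕ), (∀ τ ∈ L, IsConnectedPerm τ) ∧ prodX L = u := by
  intro n
  induction n with
  | zero =>
    intro u hlen hu
    have : u = [] := List.length_eq_zero_iff.1 (Nat.le_zero.1 hlen)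
    subst this
    exact factor_nil
  | succ n ih =>
    intro u hlen hu
    rcases eq_or_ne u [] with rfl | hne
    · exact factor_nil
    · classical
      have hupos : 0 < u.length := List.length_pos_iff.2 hne
      have hPex : ∃ i, 1 ≤ i ∧ ∀ x ∈ u.take i, x ≤ i :=
        ⟨u.length, hupos, fun x hx => by
          rw [List.take_length] at hx; exact (hu.2 x hx).2⟩
      set i := Nat.find hPex with hidef
      have hi1 : 1 ≤ i := (Nat.find_spec hPex).1
      have hicl : ∀ x ∈ u.take i, x ≤ i := (Nat.find_spec hPex).2
      have hile : i ≤ u.length :=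
        Nat.find_min' hPex ⟨hupos, fun x hx => by
          rw [List.take_length] at hx; exact (hu.2 x hx).2⟩
      have hσperm : IsPermWord (u.take i) := take_isPermWord hu hile hicl
      have hσlen : (u.take i).length = i := by rw [List.length_take]; omega
      have hσconn : IsConnectedPerm (u.take i) := by
        refine ⟨hσperm, ?_, ?_⟩
        · intro h
          rw [h] at hσlen
          simp at hσlen
          omega
        · intro j hj1 hj2 hall
          rw [hσlen] at hj2
          refine Nat.find_min hPex hj2 ⟨hj1, ?_⟩
          intro x hx
          apply hall
          rw [List.take_take, Nat.min_eq_left (le_of_lt hj2)]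
          exact hx
      have hdrop := drop_gt hu hile hicl
      have hv' : IsPermWord ((u.drop i).map (· - i)) := by
        constructor
        · refine List.Nodup.map_on ?_ ((List.drop_sublist i u).nodup hu.1)
          intro x hx y hy hxy
          have := hdrop x hx
          have := hdrop y hy
          omega
        · intro x hx
          obtain ⟨y, hy, rfl⟩ := List.mem_map.1 hx
          have h1 := hdrop y hy
          have h2 := (hu.2 y (List.mem_of_mem_drop hy)).2
          rw [List.length_map, List.length_drop]
          omega
      have hfact : mulX (u.take i) ((u.drop i).map (· - i)) = u := by
        rw [mulX, List.map_map, hσlen]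
        have hmap : (u.drop i).map ((fun x => x + i) ∘ (fun x => x - i)) = u.drop i := by
          have : ∀ x ∈ u.drop i, ((fun x => x + i) ∘ (fun x => x - i)) x = id x := by
            intro x hx
            have := hdrop x hx
            simp [Function.comp]
            omega
          rw [List.map_congr_left this, List.map_id]
        rw [hmap, List.take_append_drop]
      have hv'len : ((u.drop i).map (· - i)).length ≤ n := by
        rw [List.length_map, List.length_drop]
        omega
      obtain ⟨L', ⟨hL'conn, hL'prod⟩, hL'uniq⟩ := ih _ hv'len hv'
      refine ⟨u.take i :: L', ⟨?_, ?_⟩, ?_⟩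
      · intro τ hτ
        rcases List.mem_cons.1 hτ with rfl | hτ
        · exact hσconn
        · exact hL'conn τ hτ
      · rw [prodX_cons, hL'prod, hfact]
      · rintro M ⟨hMconn, hMprod⟩
        cases M with
        | nil => exact absurd (hMprod.symm ▸ rfl) hne
        | cons τ M' =>
          have hτc := hMconn τ (by simp)
          have hτlen : 1 ≤ τ.length := List.length_pos_iff.2 hτc.2.1
          have hu_eq : u = τ ++ (prodX M').map (· + τ.length) := by
            rw [← hMprod, prodX_cons, mulX]
          have hτtake : u.take τ.length = τ := by
            rw [hu_eq, List.take_left]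
          have hτle : τ.length ≤ u.length := by
            rw [hu_eq, List.length_append]; omega
          have hPτ : 1 ≤ τ.length ∧ ∀ x ∈ u.take τ.length, x ≤ τ.length := by
            refine ⟨hτlen, ?_⟩
            intro x hx
            rw [hτtake] at hx
            exact (hτc.1.2 x hx).2
          have hile2 : i ≤ τ.length := Nat.find_min' hPex hPτ
          have hieq : i = τ.length := by
            rcases eq_or_lt_of_le hile2 with h | h
            · exact h
            · exfalso
              apply hτc.2.2 i hi1 h
              intro x hx
              apply hicl
              rw [← hτtake, List.take_take, Nat.min_eq_left (le_of_lt h)] at hx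
              exact hx
          have hτσ : τ = u.take i := by rw [hieq, hτtake]
          have hcancel : prodX M' = (u.drop i).map (· - i) := by
            have h1 : mulX τ (prodX M') = mulX τ ((u.drop i).map (· - i)) := by
              rw [← prodX_cons, hMprod, hτσ]
              exact hfact.symm
            rw [mulX, mulX] at h1
            have h2 := List.append_cancel_left h1
            exact List.map_injective_iff.2 (add_left_injective _) h2
          have hM' : M' = L' := hL'uniq M' ⟨fun τ' hτ' => hMconn τ' (by simp [hτ']), hcancel⟩
          rw [hτσ, hM']

-- ### general lemmas on ltLex

lemma ltLex_nil_left {X : Type*} (ltX : X → X → Prop) (v : List X) : ¬ ltLex ltX [] v := by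
  rintro (⟨w, hw, h⟩ | ⟨r, s, t, x, y, _, h, _⟩)
  · obtain ⟨-, rfl⟩ := List.append_eq_nil_iff.1 h.symm
    exact hw rfl
  · exact List.cons_ne_nil x s (List.append_eq_nil_iff.1 h.symm).2

lemma ltLex_of_ne_nil {X : Type*} (ltX : X → X → Prop) {v : List X} (h : v ≠ []) :
    ltLex ltX v [] := Or.inl ⟨v, h, rfl⟩

lemma ltLex_cons_iff {X : Type*} (ltX : X → X → Prop) (a b : X) (u v : List X) :
    ltLex ltX (a :: u) (b :: v) ↔ ltX a b ∨ (a = b ∧ ltLex ltX u v) := by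
  constructor
  · rintro (⟨w, hw, h⟩ | ⟨r, s, t, x, y, hxy, hu, hv⟩)
    · rw [List.cons_append, List.cons.injEq] at h
      obtain ⟨rfl, rfl⟩ := h
      exact Or.inr ⟨rfl, Or.inl ⟨w, hw, rfl⟩⟩
    · cases r with
      | nil =>
        rw [List.nil_append, List.cons.injEq] at hu hv
        obtain ⟨rfl, rfl⟩ := hu
        obtain ⟨rfl, rfl⟩ := hv
        exact Or.inl hxy
      | cons c r' =>
        rw [List.cons_append, List.cons.injEq] at hu hv
        obtain ⟨rfl, rfl⟩ := hu
        obtain ⟨rfl, rfl⟩ := hv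
        exact Or.inr ⟨rfl, Or.inr ⟨r', s, t, x, y, hxy, rfl, rfl⟩⟩
  · rintro (h | ⟨rfl, ⟨w, hw, rfl⟩ | ⟨r, s, t, x, y, hxy, rfl, rfl⟩⟩)
    · exact Or.inr ⟨[], u, v, a, b, h, rfl, rfl⟩
    · exact Or.inl ⟨w, hw, rfl⟩
    · exact Or.inr ⟨a :: r, s, t, x, y, hxy, rfl, rfl⟩

lemma ltLex_asymm {X : Type*} {ltX : X → X → Prop}
    (h : ∀ x y : X, ltX x y → ¬ ltX y x) :
    ∀ u v : List X, ltLex ltX u v → ¬ ltLex ltX v u := by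
  intro u
  induction u with
  | nil => exact fun v hv _ => ltLex_nil_left ltX v hv
  | cons a u ih =>
    intro v h1 h2
    cases v with
    | nil => exact ltLex_nil_left ltX (a :: u) h2
    | cons b v' =>
      rw [ltLex_cons_iff] at h1 h2
      rcases h1 with h1 | ⟨heq1, h1⟩
      · rcases h2 with h2 | ⟨heq2, h2⟩
        · exact h a b h1 h2
        · subst heq2; exact h _ _ h1 h1
      · rcases h2 with h2 | ⟨heq2, h2⟩
        · subst heq1; exact h _ _ h2 h2
        · exact ih v' h1 h2

lemma ltLex_total {X : Type*} {ltX : X → X → Prop}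
    (h : ∀ x y : X, x ≠ y → ltX x y ∨ ltX y x) :
    ∀ u v : List X, u ≠ v → ltLex ltX u v ∨ ltLex ltX v u := by
  intro u
  induction u with
  | nil => exact fun v hv => Or.inr (ltLex_of_ne_nil ltX (Ne.symm hv))
  | cons a u ih =>
    intro v hv
    cases v with
    | nil => exact Or.inl (ltLex_of_ne_nil ltX (by simp))
    | cons b v' =>
      rcases eq_or_ne a b with rfl | hab
      · have huv : u ≠ v' := fun h' => hv (by rw [h'])
        rcases ih v' huv with h' | h'
        · exact Or.inl ((ltLex_cons_iff ..).2 (Or.inr ⟨rfl, h'⟩))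
        · exact Or.inr ((ltLex_cons_iff ..).2 (Or.inr ⟨rfl, h'⟩))
      · rcases h a b hab with h' | h'
        · exact Or.inl ((ltLex_cons_iff ..).2 (Or.inl h'))
        · exact Or.inr ((ltLex_cons_iff ..).2 (Or.inl h'))

lemma permLt_asymm : ∀ u v : List ℕ, permLt u v → ¬ permLt v u :=
  ltLex_asymm fun _ _ => Nat.lt_asymm

lemma permLt_total : ∀ u v : List ℕ, u ≠ v → permLt u v ∨ permLt v u :=
  ltLex_total fun _ _ h => h.lt_or_gt

-- ### the forward direction of the order isomorphism

lemma permLt_append_cons {P r : List ℕ} {x y : ℕ} (hxy : x < y) (s t : List ℕ) :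
    permLt (P ++ r ++ x :: s) (P ++ r ++ y :: t) :=
  Or.inr ⟨P ++ r, s, t, x, y, hxy, rfl, rfl⟩

lemma phi_forward {L M : List (List ℕ)} (hL : ∀ τ ∈ L, IsConnectedPerm τ)
    (hM : ∀ τ ∈ M, IsConnectedPerm τ) (h : ltLex permLt L M) :
    permLt (prodX L) (prodX M) := by
  rcases h with ⟨N, hN, rfl⟩ | ⟨R, S, T, σ, τ, hστ, rfl, rfl⟩
  · left
    refine ⟨(prodX N).map (· + (prodX M).length), ?_, ?_⟩
    · have : prodX N ≠ [] := prodX_ne_nil (fun ρ hρ => hL ρ (by simp [hρ])) hN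
      simpa using this
    · rw [prodX_append]; rfl
  · have hσc := hL σ (by simp)
    have hτc := hM τ (by simp)
    rcases hστ with ⟨w, hw, hστ'⟩ | ⟨r, s, t, x, y, hxy, rfl, rfl⟩
    · exfalso
      have hτlen : 1 ≤ τ.length := List.length_pos_iff.2 hτc.2.1
      have hwlen : 0 < w.length := List.length_pos_iff.2 hw
      have hlt : τ.length < σ.length := by
        rw [hστ', List.length_append]; omega
      apply hσc.2.2 τ.length hτlen hlt
      intro x hx
      rw [hστ', List.take_left] at hx
      exact (hτc.1.2 x hx).2
    · set k := (prodX R).length with hk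
      have e1 : prodX (R ++ (r ++ x :: s) :: S)
          = (prodX R ++ r.map (· + k)) ++ (x + k) ::
            (s.map (· + k) ++ ((prodX S).map (· + (r ++ x :: s).length)).map (· + k)) := by
        rw [prodX_append, prodX_cons]
        simp [mulX, List.map_append, List.append_assoc, hk]
      have e2 : prodX (R ++ (r ++ y :: t) :: T)
          = (prodX R ++ r.map (· + k)) ++ (y + k) ::
            (t.map (· + k) ++ ((prodX T).map (· + (r ++ y :: t).length)).map (· + k)) := by
        rw [prodX_append, prodX_cons]
        simp [mulX, List.map_append, List.append_assoc, hk]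
      rw [e1, e2]
      exact permLt_append_cons (by omega) _ _

/-- **Lemma.** The map `φ : (𝔖, ≺) → (⟨ℭ⟩, ≺_lex)`, sending a permutation to the word
of connected permutations of its unique `×`-factorization, is an isomorphism of totally
ordered sets; here `⟨ℭ⟩` carries the pseudo-lexicographic order associated to the
restriction of `≺` to the connected permutations.  Concretely: every permutation
factors uniquely into connected permutations, and for words `L, M` of connected
permutations, `L ≺_lex M` iff `ψ(L) ≺ ψ(M)`. -/
theorem phi_orderIso :
    (∀ u : List ℕ, IsPermWord u →
      ∃! L : List (List ℕ), (∀ τ ∈ L, IsConnectedPerm τ) ∧ prodX L = u) ∧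
    (∀ L M : List (List ℕ), (∀ τ ∈ L, IsConnectedPerm τ) →
      (∀ τ ∈ M, IsConnectedPerm τ) →
      (ltLex permLt L M ↔ permLt (prodX L) (prodX M))) := by
  constructor
  · intro u hu
    exact factor_exu u.length u le_rfl hu
  · intro L M hL hM
    constructor
    · exact phi_forward hL hM
    · intro h
      rcases eq_or_ne L M with rfl | hne
      · exact absurd h (permLt_asymm _ _ h)
      · rcases ltLex_total permLt_total L M hne with h' | h'
        · exact h'
        · exact absurd h (permLt_asymm _ _ (phi_forward hM hL h'))


end AdamsPaper

end
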